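/- For all real numbers x, y, z, the function x ↦ 𝒟(x,y,z) is differentiable and its derivative in x equals H(y+z, x); that is, ∂𝒟(x,y,z)/∂x = 1/(1 + e^{(y+z+x)/2}) + 1/(1 + e^{(y+z−x)/2}). -/

import Mathlib

/-!
Statement 10: the McShane–Mirzakhani function `𝒟(x,y,z)` is differentiable in `x` with
`∂𝒟/∂x = H(y+z, x) = 1/(1 + e^{(y+z+x)/2}) + 1/(1 + e^{(y+z−x)/2})`.
-/

noncomputable section

/-- The McShane–Mirzakhani function
`𝒟(x,y,z) = 2 log((e^{x/2} + e^{(y+z)/2})/(e^{−x/2} + e^{(y+z)/2}))`. -/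
def Dfun (x y z : ℝ) : ℝ :=
  2 * Real.log ((Real.exp (x / 2) + Real.exp ((y + z) / 2)) /
      (Real.exp (-x / 2) + Real.exp ((y + z) / 2)))

/-- The kernel `H(x,y) = 1/(1 + e^{(x+y)/2}) + 1/(1 + e^{(x−y)/2})`. -/
def Hker (x y : ℝ) : ℝ :=
  1 / (1 + Real.exp ((x + y) / 2)) + 1 / (1 + Real.exp ((x - y) / 2))

/-- For all `x, y, z`, the function `x ↦ 𝒟(x,y,z)` has derivative `H(y+z, x)` at `x`. -/
theorem Dfun_hasDerivAt (x y z : ℝ) :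
    HasDerivAt (fun u : ℝ => Dfun u y z) (Hker (y + z) x) x := by
  set c := Real.exp ((y + z) / 2) with hc
  have hcpos : 0 < c := Real.exp_pos _
  have hA : ∀ u : ℝ, (0:ℝ) < Real.exp (u / 2) + c :=
    fun u => add_pos (Real.exp_pos _) hcpos
  have hB : ∀ u : ℝ, (0:ℝ) < Real.exp (-u / 2) + c :=
    fun u => add_pos (Real.exp_pos _) hcpos
  have h1 : HasDerivAt (fun u : ℝ => Real.log (Real.exp (u / 2) + c))
      ((Real.exp (x / 2) * (1 / 2)) / (Real.exp (x / 2) + c)) x := by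
    exact (((hasDerivAt_id x).div_const 2).exp.add_const c).log (hA x).ne'
  have h2 : HasDerivAt (fun u : ℝ => Real.log (Real.exp (-u / 2) + c))
      ((Real.exp (-x / 2) * (-1 / 2)) / (Real.exp (-x / 2) + c)) x := by
    have : HasDerivAt (fun u : ℝ => -u / 2) (-1 / 2) x := by
      simpa using ((hasDerivAt_id x).neg.div_const 2)
    exact ((this.exp.add_const c)).log (hB x).ne'
  have h3 := ((h1.sub h2).const_mul (2 : ℝ))
  have hfun : (fun u : ℝ => Dfun u y z)
      = fun u : ℝ => 2 * (Real.log (Real.exp (u / 2) + c)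
        - Real.log (Real.exp (-u / 2) + c)) := by
    funext u
    rw [Dfun, Real.log_div (hA u).ne' (hB u).ne']
  rw [hfun]
  refine h3.congr_deriv ?_
  symm
  have e1 : Real.exp ((y + z + x) / 2) = c * Real.exp (x / 2) := by
    rw [hc, ← Real.exp_add]; ring_nf
  have e2 : Real.exp ((y + z - x) / 2) = c * Real.exp (-x / 2) := by
    rw [hc, ← Real.exp_add]; ring_nf
  have hx1 : (0:ℝ) < Real.exp (x / 2) := Real.exp_pos _
  have hx2 : (0:ℝ) < Real.exp (-x / 2) := Real.exp_pos _
  have hxx : Real.exp (x / 2) * Real.exp (-x / 2) = 1 := by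
    rw [← Real.exp_add]; ring_nf; exact Real.exp_zero
  rw [Hker, e1, e2]
  have d1 : (0:ℝ) < 1 + c * Real.exp (x / 2) := by positivity
  have d2 : (0:ℝ) < 1 + c * Real.exp (-x / 2) := by positivity
  set a := Real.exp (x / 2)
  set b := Real.exp (-x / 2)
  field_simp
  linear_combination (-(c * (a + b) + 2 * c ^ 2 * (a * b + 1) + c ^ 3 * (a + b))) * hxx

end
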